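/- Let cl_τ be a closure operator on the group uM = u*M (the Ellis group of a flow) such that cl_τ is idempotent, monotone, preserves finite unions, satisfies A ⊆ cl_τ(A), and multiplication on uM is continuous in each variable separately for the induced τ-topology, which is compact and T₁. Define H(uM) as the intersection of cl_τ(V) over all τ-neighborhoods V of the identity u. Then H(uM) is a τ-closed normal subgroup of uM. -/
import Mathlib


/-- Let `K` be a group (such as the Ellis group `uM`) with a compact `T₁` topology (induced
by the `τ`-closure operator) in which multiplication is continuous in each variable
separately and inversion is continuous. Let `H` be the intersection of the closures of all
neighborhoods of the identity. Then `H` is a closed normal subgroup of `K`. -/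
theorem H_uM_is_closed_normal_subgroup
    (K : Type*) [Group K] [TopologicalSpace K] [CompactSpace K] [T1Space K]
    (hl : ∀ a : K, Continuous fun x : K => a * x)
    (hr : ∀ a : K, Continuous fun x : K => x * a)
    (hinv : Continuous fun x : K => x⁻¹) :
    IsClosed (⋂ V ∈ nhds (1 : K), closure V) ∧
    (1 : K) ∈ (⋂ V ∈ nhds (1 : K), closure V) ∧
    (∀ a ∈ (⋂ V ∈ nhds (1 : K), closure V), a⁻¹ ∈ (⋂ V ∈ nhds (1 : K), closure V)) ∧
    (∀ a ∈ (⋂ V ∈ nhds (1 : K), closure V), ∀ b ∈ (⋂ V ∈ nhds (1 : K), closure V),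
      a * b ∈ (⋂ V ∈ nhds (1 : K), closure V)) ∧
    (∀ g : K, ∀ a ∈ (⋂ V ∈ nhds (1 : K), closure V),
      g * a * g⁻¹ ∈ (⋂ V ∈ nhds (1 : K), closure V)) := by
  have memH : ∀ x : K, x ∈ (⋂ V ∈ nhds (1 : K), closure V) ↔
      ∀ V ∈ nhds (1 : K), x ∈ closure V := by
    intro x; simp [Set.mem_iInter]
  refine ⟨?_, ?_, ?_, ?_, ?_⟩
  · exact isClosed_iInter fun V => isClosed_iInter fun _ => isClosed_closure
  · rw [memH]; intro V hV; exact subset_closure (mem_of_mem_nhds hV)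
  · -- inverses
    intro a ha
    rw [memH] at ha ⊢
    intro V hV
    rw [mem_closure_iff]
    intro U hU haU
    have h1 : (fun x : K => x⁻¹) ⁻¹' interior V ∈ nhds (1 : K) :=
      IsOpen.mem_nhds (isOpen_interior.preimage hinv)
        (by simpa using mem_interior_iff_mem_nhds.mpr hV)
    have ha' := ha _ h1
    rw [mem_closure_iff] at ha'
    obtain ⟨x, hxU, hxV⟩ := ha' ((fun x : K => x⁻¹) ⁻¹' U) (hU.preimage hinv)
      (by simpa using haU)
    exact ⟨x⁻¹, hxU, interior_subset hxV⟩
  · -- multiplication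
    intro a ha b hb
    rw [memH] at ha hb ⊢
    intro V hV
    rw [mem_closure_iff]
    intro U hU habU
    -- Step 1: find y ∈ interior V with a * y ∈ U, using b ∈ closure (interior V)
    have hbN : b ∈ closure (interior V) := hb _ (interior_mem_nhds.mpr hV)
    rw [mem_closure_iff] at hbN
    obtain ⟨y, hyU, hyV⟩ := hbN ((fun x : K => a * x) ⁻¹' U) (hU.preimage (hl a)) habU
    -- Step 2: find x with x * y ∈ U and x * y ∈ interior V, using
    -- a ∈ closure {x | x * y ∈ interior V} (a neighborhood of 1 since y ∈ interior V)
    have haN : a ∈ closure ((fun x : K => x * y) ⁻¹' interior V) :=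
      ha _ (IsOpen.mem_nhds (isOpen_interior.preimage (hr y)) (by simpa using hyV))
    rw [mem_closure_iff] at haN
    obtain ⟨x, hxU, hxV⟩ := haN ((fun x : K => x * y) ⁻¹' U) (hU.preimage (hr y)) hyU
    exact ⟨x * y, hxU, interior_subset hxV⟩
  · -- normality
    intro g a ha
    rw [memH] at ha ⊢
    intro V hV
    rw [mem_closure_iff]
    intro U hU hgU
    have hc : Continuous fun x : K => g * x * g⁻¹ := (hr g⁻¹).comp (hl g)
    have h1 : (fun x : K => g * x * g⁻¹) ⁻¹' interior V ∈ nhds (1 : K) :=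
      IsOpen.mem_nhds (isOpen_interior.preimage hc)
        (by simpa using mem_interior_iff_mem_nhds.mpr hV)
    have ha' := ha _ h1
    rw [mem_closure_iff] at ha'
    obtain ⟨x, hxU, hxV⟩ := ha' ((fun x : K => g * x * g⁻¹) ⁻¹' U) (hU.preimage hc) hgU
    exact ⟨g * x * g⁻¹, hxU, interior_subset hxV⟩
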